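/- The standard G₂ 3-form is a calibration on ℝ⁷: for any orthonormal vectors u, v, w in ℝ⁷, one has |φ(u, v, w)| ≤ 1. -/

import Mathlib

set_option maxHeartbeats 1000000

noncomputable section

/-- The alternating 3-form `dx_{ijk}` on `ℝ⁷` (with 0-indexed coordinates):
`(u,v,w) ↦ det` of the 3×3 matrix of their `(i,j,k)`-coordinates. -/
def dx3 (i j k : Fin 7) (u v w : EuclideanSpace ℝ (Fin 7)) : ℝ :=
  Matrix.det !![u i, v i, w i; u j, v j, w j; u k, v k, w k]

/-- The standard G₂ 3-form on `ℝ⁷`: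
`φ = dx₁₂₃ + dx₁₄₅ + dx₁₆₇ + dx₂₄₆ − dx₂₅₇ − dx₃₄₇ − dx₃₅₆` (in 1-indexed notation). -/
def g2Form (u v w : EuclideanSpace ℝ (Fin 7)) : ℝ :=
  dx3 0 1 2 u v w + dx3 0 3 4 u v w + dx3 0 5 6 u v w + dx3 1 3 5 u v w
    - dx3 1 4 6 u v w - dx3 2 3 6 u v w - dx3 2 4 5 u v w

open scoped RealInnerProductSpace

private lemma dx3_eq (i j k : Fin 7) (u v w : EuclideanSpace ℝ (Fin 7)) :
    dx3 i j k u v w = u i*v j*w k - u i*w j*v k - v i*u j*w k + v i*w j*u k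
      + w i*u j*v k - w i*v j*u k := by
  simp [dx3, Matrix.det_fin_three]

private lemma vec7_five {α : Type*} (a b c d e f g : α) :
    ![a,b,c,d,e,f,g] (5 : Fin 7) = f := rfl

private lemma vec7_six {α : Type*} (a b c d e f g : α) :
    ![a,b,c,d,e,f,g] (6 : Fin 7) = g := rfl

/-- **The G₂ 3-form is a calibration on `ℝ⁷`.** For any orthonormal vectors
`u, v, w` in `ℝ⁷`, `|φ(u,v,w)| ≤ 1`. -/
theorem g2Form_is_calibration (u v w : EuclideanSpace ℝ (Fin 7))
    (h : Orthonormal ℝ ![u, v, w]) :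
    |g2Form u v w| ≤ 1 := by
  have hu := h.1 0
  have hv := h.1 1
  have hw := h.1 2
  simp only [Matrix.cons_val_zero, Matrix.cons_val_one, Matrix.head_cons,
    Matrix.cons_val_two, Matrix.tail_cons] at hu hv hw
  have huv := h.2 (show (0:Fin 3) ≠ 1 by decide)
  simp only [Matrix.cons_val_zero, Matrix.cons_val_one, Matrix.head_cons] at huv
  have hu' : ∑ i, u i * u i = 1 := by
    have := real_inner_self_eq_norm_sq u
    rw [hu, one_pow] at this
    rw [← this]
    simp only [PiLp.inner_apply, RCLike.inner_apply, conj_trivial]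
  have hv' : ∑ i, v i * v i = 1 := by
    have := real_inner_self_eq_norm_sq v
    rw [hv, one_pow] at this
    rw [← this]
    simp only [PiLp.inner_apply, RCLike.inner_apply, conj_trivial]
  have huv' : ∑ i, u i * v i = 0 := by
    simpa [PiLp.inner_apply, mul_comm] using huv
  simp only [Fin.sum_univ_seven] at hu' hv' huv'
  set b : EuclideanSpace ℝ (Fin 7) := (WithLp.equiv 2 (Fin 7 → ℝ)).symm
    ![(u 1*v 2 - u 2*v 1) + (u 3*v 4 - u 4*v 3) + (u 5*v 6 - u 6*v 5),
      -(u 0*v 2 - u 2*v 0) + (u 3*v 5 - u 5*v 3) - (u 4*v 6 - u 6*v 4),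
      (u 0*v 1 - u 1*v 0) - (u 3*v 6 - u 6*v 3) - (u 4*v 5 - u 5*v 4),
      -(u 0*v 4 - u 4*v 0) - (u 1*v 5 - u 5*v 1) + (u 2*v 6 - u 6*v 2),
      (u 0*v 3 - u 3*v 0) + (u 1*v 6 - u 6*v 1) + (u 2*v 5 - u 5*v 2),
      -(u 0*v 6 - u 6*v 0) + (u 1*v 3 - u 3*v 1) - (u 2*v 4 - u 4*v 2),
      (u 0*v 5 - u 5*v 0) - (u 1*v 4 - u 4*v 1) - (u 2*v 3 - u 3*v 2)] with hb
  have key1 : g2Form u v w = ⟪b, w⟫ := by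
    simp only [g2Form, dx3_eq, hb, PiLp.inner_apply, RCLike.inner_apply,
      conj_trivial, Fin.sum_univ_seven, WithLp.equiv_symm_apply, PiLp.toLp_apply,
      Matrix.cons_val_zero, Matrix.cons_val_one, Matrix.head_cons,
      Matrix.cons_val_two, Matrix.tail_cons, Matrix.cons_val_three,
      Matrix.cons_val_four, vec7_five, vec7_six]
    ring
  have key2 : ⟪b, b⟫ = 1 := by
    simp only [hb, PiLp.inner_apply, RCLike.inner_apply, conj_trivial,
      Fin.sum_univ_seven, WithLp.equiv_symm_apply, PiLp.toLp_apply,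
      Matrix.cons_val_zero, Matrix.cons_val_one, Matrix.head_cons,
      Matrix.cons_val_two, Matrix.tail_cons, Matrix.cons_val_three,
      Matrix.cons_val_four, vec7_five, vec7_six]
    linear_combination
      (v 0*v 0 + v 1*v 1 + v 2*v 2 + v 3*v 3 + v 4*v 4 + v 5*v 5 + v 6*v 6) * hu'
      + hv'
      - (u 0*v 0 + u 1*v 1 + u 2*v 2 + u 3*v 3 + u 4*v 4 + u 5*v 5 + u 6*v 6) * huv'
  have hbnorm : ‖b‖ = 1 := by
    have h1 : ‖b‖ ^ 2 = 1 := by rw [← real_inner_self_eq_norm_sq, key2]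
    nlinarith [norm_nonneg b]
  calc |g2Form u v w| = |⟪b, w⟫| := by rw [key1]
    _ ≤ ‖b‖ * ‖w‖ := abs_real_inner_le_norm b w
    _ = 1 := by rw [hbnorm, hw, one_mul]

end
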